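/- For each λ ∈ Λ and each i, the operator θ_λ ∘ 𝔗_i − 𝔗_i ∘ θ_{s_i λ} preserves each summand M_w of 𝔐 and acts on M_w as multiplication by the scalar (v−1)·((wz)^λ − (wz)^{s_i λ}) / (1 − (wz)^{−α_i∨}). In particular the 𝔗_i and θ_λ satisfy the Bernstein relation of the affine Hecke algebra. (Theorem 1.2 of 'Hecke Modules from Metaplectic Ice'.) -/

import Mathlib

/-!
Theorem 1.1 (quadratic relation) of "Hecke Modules from Metaplectic Ice".

Setting: `Λ` is a free abelian group of finite rank containing a reduced crystallographic
root system `Φ` (the `Φ∨` of the paper) with Weyl group `W` generated by simple reflections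
`s i` (acting on `Λ` through `σ`), simple coroots `α i`, and `z : T̂(ℂ) = Hom(Λ, ℂˣ)`
regular.  Given vector spaces `M w` (`w ∈ W`) and linear maps `A_i^w : M w → M (s i * w)`
satisfying assumptions (a) and (b), the operators `𝔗_i` on `𝔐 = ⊕_w M w` satisfy the
quadratic relation `𝔗_i² = (v−1)𝔗_i + v`.

The family of maps is encoded as `A i w : M (s i * w) →ₗ[ℂ] M w`, i.e. `A i w` is the map
`A_i^{s_i w}` of the paper (an equivalent parametrization, since `s i` is an involution),
which avoids dependent-type casts.  The operator `heckeA s M A i` of the total space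
`𝔐 = Π w, M w` is then `(φ_w) ↦ (A_i^{s_i w} φ_{s_i w})`, and `heckeT` is `𝔗_i`.
-/

noncomputable section

/-- The group structure on `A ≃+ A` (composition), as `AddAut A` carried in the older Mathlib. -/
instance addEquivSelfGroup (A : Type*) [Add A] : Group (A ≃+ A) where
  mul g h := AddEquiv.trans h g
  one := AddEquiv.refl _
  inv := AddEquiv.symm
  mul_assoc _ _ _ := rfl
  one_mul _ := rfl
  mul_one _ := rfl
  inv_mul_cancel := AddEquiv.self_trans_symm

/-- Alternating composite: `altComp f g m = ⋯ ∘ g ∘ f` with `m` factors, rightmost `f`. -/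
def altComp {E : Type*} [AddCommGroup E] [Module ℂ E] (f g : E →ₗ[ℂ] E) : ℕ → (E →ₗ[ℂ] E)
  | 0 => LinearMap.id
  | m + 1 => altComp g f m ∘ₗ f

/-- The "intertwining" part of the Hecke operator: `(φ_w)_w ↦ (A_i^{s_i w} φ_{s_i w})_w`. -/
def heckeA {W : Type*} [Group W] {r : ℕ} (s : Fin r → W)
    (M : W → Type*) [∀ w, AddCommGroup (M w)] [∀ w, Module ℂ (M w)]
    (A : ∀ (i : Fin r) (w : W), M (s i * w) →ₗ[ℂ] M w) (i : Fin r) :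
    (∀ w, M w) →ₗ[ℂ] ∀ w, M w where
  toFun φ w := A i w (φ (s i * w))
  map_add' φ ψ := by funext w; simp
  map_smul' c φ := by funext w; simp

/-- The diagonal operator multiplying the `w`-component by the scalar `c w`. -/
def diagOp {W : Type*} (M : W → Type*) [∀ w, AddCommGroup (M w)] [∀ w, Module ℂ (M w)]
    (c : W → ℂ) : (∀ w, M w) →ₗ[ℂ] ∀ w, M w where
  toFun φ w := c w • φ w
  map_add' φ ψ := by funext w; simp
  map_smul' t φ := by
    funext w
    simp only [Pi.smul_apply, RingHom.id_apply]
    exact smul_comm _ _ _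

/-- The Hecke operator `𝔗_i` on `𝔐 = Π w, M w`:
`(𝔗_i φ)_w = ((1−v)(wz)^{α_i} / (1 − (wz)^{α_i})) φ_w + A_i^{s_i w} (φ_{s_i w})`,
where `(wz)^μ = z(w⁻¹ μ)`. -/
def heckeT {Λ W : Type*} [AddCommGroup Λ] [Group W] {r : ℕ}
    (σ : W →* Λ ≃+ Λ) (s : Fin r → W) (α : Fin r → Λ) (z : Λ → ℂ) (v : ℂ)
    (M : W → Type*) [∀ w, AddCommGroup (M w)] [∀ w, Module ℂ (M w)]
    (A : ∀ (i : Fin r) (w : W), M (s i * w) →ₗ[ℂ] M w) (i : Fin r) :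
    (∀ w, M w) →ₗ[ℂ] ∀ w, M w :=
  diagOp M (fun w => ((1 - v) * z (σ w⁻¹ (α i))) / (1 - z (σ w⁻¹ (α i)))) + heckeA s M A i

/-- **Theorem 1.2 of "Hecke Modules from Metaplectic Ice" (Bernstein relation).**
With `θ_λ` acting on the summand `M w` as the scalar `(wz)^λ` (the operator `diagOp`),
the operator `θ_λ 𝔗_i − 𝔗_i θ_{s_i λ}` preserves each summand `M w` and acts on it as
multiplication by `(v−1)·((wz)^λ − (wz)^{s_i λ}) / (1 − (wz)^{−α_i∨})`; in particular the
`𝔗_i` and `θ_λ` satisfy the Bernstein relation of the affine Hecke algebra. -/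
theorem heckeT_bernstein
    -- Λ: free abelian group of finite rank
    {Λ : Type*} [AddCommGroup Λ] [Module.Free ℤ Λ] [Module.Finite ℤ Λ]
    -- W: finite Weyl group acting on Λ
    {W : Type*} [Group W] [Fintype W] {r : ℕ}
    (σ : W →* Λ ≃+ Λ) (s : Fin r → W) (α : Fin r → Λ) (pair : Fin r → Λ →+ ℤ)
    -- Φ: reduced crystallographic root system inside Λ, stable under W
    (Φ : Set Λ) (hΦfin : Φ.Finite) (hΦneg : ∀ μ ∈ Φ, -μ ∈ Φ)
    (hΦW : ∀ (w : W), ∀ μ ∈ Φ, σ w μ ∈ Φ)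
    (hΦred : ∀ μ ∈ Φ, (2 : ℤ) • μ ∉ Φ)
    (hα : ∀ i, α i ∈ Φ) (hpair : ∀ i, pair i (α i) = 2)
    (hrefl : ∀ (i : Fin r) (μ : Λ), σ (s i) μ = μ - pair i μ • α i)
    (hs2 : ∀ i, s i * s i = 1)
    (hgen : Subgroup.closure (Set.range s) = ⊤)
    -- z : a regular element of T̂(ℂ) = Hom(Λ, ℂˣ)
    (z : Λ → ℂ) (hz0 : z 0 = 1) (hzadd : ∀ μ ν, z (μ + ν) = z μ * z ν)
    (hzne : ∀ μ, z μ ≠ 0) (hzreg : ∀ μ ∈ Φ, z μ ≠ 1)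
    (v : ℂ)
    -- the data of Assumptions 1.1
    (M : W → Type*) [∀ w, AddCommGroup (M w)] [∀ w, Module ℂ (M w)]
    (A : ∀ (i : Fin r) (w : W), M (s i * w) →ₗ[ℂ] M w)
    -- (a): A_i^{s_i w} ∘ A_i^w is the scalar (6) of the paper
    (ha : ∀ (i : Fin r) (w : W) (φ : ∀ u, M u),
      heckeA s M A i (heckeA s M A i φ) w =
        (((1 - v * z (σ w⁻¹ (α i))) * (1 - v * z (σ w⁻¹ (-α i)))) /
          ((1 - z (σ w⁻¹ (α i))) * (1 - z (σ w⁻¹ (-α i))))) • φ w)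
    -- (b): the braid relations (7) of the paper
    (hbraid : ∀ i j : Fin r, i ≠ j →
      altComp (heckeA s M A i) (heckeA s M A j) (orderOf (s i * s j)) =
        altComp (heckeA s M A j) (heckeA s M A i) (orderOf (s i * s j))) :
    -- θ_λ 𝔗_i − 𝔗_i θ_{s_i λ} preserves each summand M_w, acting on it by the scalar
    -- (v−1)·((wz)^λ − (wz)^{s_i λ}) / (1 − (wz)^{−α_i∨})  (the Bernstein relation)
    ∀ (lam : Λ) (i : Fin r) (φ : ∀ w, M w) (w : W),
      (diagOp M (fun u => z (σ u⁻¹ lam)) ∘ₗ heckeT σ s α z v M A i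
        - heckeT σ s α z v M A i ∘ₗ diagOp M (fun u => z (σ u⁻¹ (σ (s i) lam)))) φ w
      = ((v - 1) * (z (σ w⁻¹ lam) - z (σ w⁻¹ (σ (s i) lam))) /
          (1 - z (σ w⁻¹ (-α i)))) • φ w := by
  intro lam i φ w
  have hsinv : (s i)⁻¹ = s i := by
    rw [inv_eq_iff_mul_eq_one, hs2]
  have key : σ (s i * w)⁻¹ (σ (s i) lam) = σ w⁻¹ lam := by
    have h1 : (s i * w)⁻¹ * s i = w⁻¹ := by
      rw [mul_inv_rev, hsinv, mul_assoc, hs2, mul_one]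
    calc σ (s i * w)⁻¹ (σ (s i) lam) = σ ((s i * w)⁻¹ * s i) lam := by
          rw [map_mul]; rfl
      _ = σ w⁻¹ lam := by rw [h1]
  have haΦ : σ w⁻¹ (α i) ∈ Φ := hΦW w⁻¹ (α i) (hα i)
  have ha1 : z (σ w⁻¹ (α i)) ≠ 1 := hzreg _ haΦ
  have ha0 : z (σ w⁻¹ (α i)) ≠ 0 := hzne _
  have hmul : z (σ w⁻¹ (α i)) * z (σ w⁻¹ (-α i)) = 1 := by
    rw [← hzadd, ← map_add, add_neg_cancel, map_zero, hz0]
  have hainv : z (σ w⁻¹ (-α i)) = (z (σ w⁻¹ (α i)))⁻¹ :=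
    eq_inv_of_mul_eq_one_left (by rw [mul_comm] at hmul; exact hmul)
  simp only [LinearMap.sub_apply, LinearMap.comp_apply, heckeT, LinearMap.add_apply,
    diagOp, heckeA, LinearMap.coe_mk, AddHom.coe_mk, Pi.add_apply, Pi.sub_apply,
    key, map_smul, hainv]
  rw [smul_add, add_sub_add_right_eq_sub, smul_smul, smul_smul, ← sub_smul]
  congr 1
  generalize z (σ w⁻¹ (α i)) = a at ha0 ha1 ⊢
  generalize z (σ w⁻¹ lam) = d
  generalize z (σ w⁻¹ (σ (s i) lam)) = b
  have hsub1 : (1 : ℂ) - a ≠ 0 := sub_ne_zero.mpr (fun h => ha1 h.symm)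
  have hsub2 : (1 : ℂ) - a⁻¹ ≠ 0 := by
    refine sub_ne_zero.mpr (fun h => ha1 ?_)
    exact inv_eq_one.mp h.symm
  have h4 : (1 : ℂ) - a⁻¹ = (a - 1) / a := by field_simp
  have ham1 : a - 1 ≠ 0 := sub_ne_zero.mpr ha1
  rw [h4, div_div_eq_mul_div, eq_div_iff ham1]
  field_simp
  ring
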